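/- Let M be a matroid of rank r on ground set [n] and let μ be the uniform distribution over the bases of M, with marginals μᵢ. Assuming the basis generating polynomial of any matroid is log-concave on the positive orthant, we have max{(1/2)·Σᵢ H(μᵢ), Σᵢ H(μᵢ) − r} ≤ log|B_M| ≤ Σᵢ H(μᵢ), where H(p) = p log(1/p) + (1−p) log(1/(1−p)). -/

import Mathlib

/-- Binary entropy `H(p) = p log(1/p) + (1-p) log(1/(1-p))`. -/
noncomputable def binEntropy (p : ℝ) : ℝ :=
  p * Real.log (1 / p) + (1 - p) * Real.log (1 / (1 - p))

open Finset

/-- Multi-point log-concavity from two-point log-concavity. -/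
private lemma lc_multi {n : ℕ} {ι : Type*} [DecidableEq ι] (G : (Fin n → ℝ) → ℝ)
    (hG : ∀ v : Fin n → ℝ, (∀ i, 0 ≤ v i) → 0 ≤ G v)
    (hlc : ∀ v w : Fin n → ℝ, (∀ i, 0 ≤ v i) → (∀ i, 0 ≤ w i) →
      ∀ l : ℝ, 0 ≤ l → l ≤ 1 → G v ^ l * G w ^ (1 - l) ≤ G (l • v + (1 - l) • w))
    (s : Finset ι) : ∀ (lam : ι → ℝ) (v : ι → Fin n → ℝ),
      (∀ j ∈ s, 0 ≤ lam j) → (∑ j ∈ s, lam j) = 1 → (∀ j ∈ s, ∀ i, 0 ≤ v j i) →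
      ∏ j ∈ s, G (v j) ^ lam j ≤ G (∑ j ∈ s, lam j • v j) := by
  induction s using Finset.induction_on with
  | empty => intro lam v _ h1 _; simp at h1
  | @insert a t ha ih =>
    intro lam v hnn hsum hv
    rw [Finset.sum_insert ha] at hsum
    rw [Finset.prod_insert ha, Finset.sum_insert ha]
    have htnn : ∀ j ∈ t, 0 ≤ lam j := fun j hj => hnn j (Finset.mem_insert_of_mem hj)
    have hvt : ∀ j ∈ t, ∀ i, 0 ≤ v j i := fun j hj => hv j (Finset.mem_insert_of_mem hj)
    have hva : ∀ i, 0 ≤ v a i := hv a (Finset.mem_insert_self a t)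
    have hlann : 0 ≤ lam a := hnn a (Finset.mem_insert_self a t)
    have htsum : 0 ≤ ∑ j ∈ t, lam j := Finset.sum_nonneg htnn
    by_cases hla : lam a = 1
    · have h0 : ∑ j ∈ t, lam j = 0 := by linarith
      have hz : ∀ j ∈ t, lam j = 0 := (Finset.sum_eq_zero_iff_of_nonneg htnn).1 h0
      have hv0 : ∑ j ∈ t, lam j • v j = 0 := Finset.sum_eq_zero fun j hj => by
        rw [hz j hj, zero_smul]
      have hp1 : ∏ j ∈ t, G (v j) ^ lam j = 1 := Finset.prod_eq_one fun j hj => by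
        rw [hz j hj, Real.rpow_zero]
      rw [hv0, hp1, hla, Real.rpow_one, mul_one, one_smul, add_zero]
    · have hle1 : lam a ≤ 1 := by linarith
      have hlt1 : lam a < 1 := lt_of_le_of_ne hle1 hla
      set m : ℝ := 1 - lam a with hm_def
      have hm : 0 < m := by simp only [hm_def]; linarith
      set w : Fin n → ℝ := ∑ j ∈ t, (lam j / m) • v j with hw_def
      have hw : ∀ i, 0 ≤ w i := by
        intro i
        rw [hw_def, Finset.sum_apply]
        exact Finset.sum_nonneg fun j hj => by
          simpa using mul_nonneg (div_nonneg (htnn j hj) hm.le) (hvt j hj i)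
      have h1 : ∏ j ∈ t, G (v j) ^ (lam j / m) ≤ G w := by
        refine ih (fun j => lam j / m) v (fun j hj => div_nonneg (htnn j hj) hm.le) ?_ hvt
        rw [← Finset.sum_div]
        have : ∑ j ∈ t, lam j = m := by linarith
        rw [this, div_self hm.ne']
      have h2 : ∏ j ∈ t, G (v j) ^ lam j ≤ G w ^ m := by
        calc ∏ j ∈ t, G (v j) ^ lam j
            = ∏ j ∈ t, (G (v j) ^ (lam j / m)) ^ m := by
              refine Finset.prod_congr rfl fun j hj => ?_
              rw [← Real.rpow_mul (hG _ (hvt j hj)), div_mul_cancel₀ _ hm.ne']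
          _ = (∏ j ∈ t, G (v j) ^ (lam j / m)) ^ m := by
              exact Real.finset_prod_rpow t _ (fun j hj => Real.rpow_nonneg (hG _ (hvt j hj)) _) m
          _ ≤ G w ^ m := Real.rpow_le_rpow
              (Finset.prod_nonneg fun j hj => Real.rpow_nonneg (hG _ (hvt j hj)) _) h1 hm.le
      have h3 : G (v a) ^ lam a * ∏ j ∈ t, G (v j) ^ lam j
          ≤ G (v a) ^ lam a * G w ^ m :=
        mul_le_mul_of_nonneg_left h2 (Real.rpow_nonneg (hG _ hva) _)
      have h4 : G (v a) ^ lam a * G w ^ m ≤ G (lam a • v a + m • w) := by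
        have := hlc (v a) w hva hw (lam a) hlann hle1
        simpa [← hm_def] using this
      have h5 : m • w = ∑ j ∈ t, lam j • v j := by
        rw [hw_def, Finset.smul_sum]
        refine Finset.sum_congr rfl fun j hj => ?_
        rw [smul_smul, mul_comm, div_mul_cancel₀ _ hm.ne']
      calc G (v a) ^ lam a * ∏ j ∈ t, G (v j) ^ lam j
          ≤ G (lam a • v a + m • w) := le_trans h3 h4
        _ = G (lam a • v a + ∑ j ∈ t, lam j • v j) := by rw [h5]

/-- Double counting. -/
private lemma swap_sum {n : ℕ} (ℬ : Finset (Finset (Fin n)))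
    (T : Finset (Fin n) → Finset (Fin n)) (f : Fin n → ℝ) :
    ∑ B ∈ ℬ, ∑ i ∈ T B, f i
      = ∑ i : Fin n, ((ℬ.filter (fun B => i ∈ T B)).card : ℝ) * f i := by
  have h1 : ∀ B ∈ ℬ, ∑ i ∈ T B, f i = ∑ i : Fin n, if i ∈ T B then f i else 0 := by
    intro B _
    rw [Finset.sum_ite_mem, Finset.univ_inter]
  rw [Finset.sum_congr rfl h1, Finset.sum_comm]
  refine Finset.sum_congr rfl fun i _ => ?_
  rw [Finset.sum_ite, Finset.sum_const_zero, add_zero, Finset.sum_const, nsmul_eq_mul]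

/-- Core entropy bound from log-concavity. -/
private lemma core_bound {n : ℕ} (ℬ : Finset (Finset (Fin n))) (hne : ℬ.Nonempty)
    (T : Finset (Fin n) → Finset (Fin n)) (ν : Fin n → ℝ)
    (hν : ∀ i, ν i = ((ℬ.filter (fun B => i ∈ T B)).card : ℝ) / (ℬ.card : ℝ))
    (hlc : ∀ v w : Fin n → ℝ, (∀ i, 0 ≤ v i) → (∀ i, 0 ≤ w i) →
      ∀ l : ℝ, 0 ≤ l → l ≤ 1 →
        (∑ B ∈ ℬ, ∏ i ∈ T B, v i) ^ l * (∑ B ∈ ℬ, ∏ i ∈ T B, w i) ^ (1 - l) ≤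
          ∑ B ∈ ℬ, ∏ i ∈ T B, (l • v + (1 - l) • w) i) :
    ∑ i : Fin n, ν i * Real.log (1 / ν i) ≤ Real.log (ℬ.card : ℝ) := by
  classical
  set G : (Fin n → ℝ) → ℝ := fun v => ∑ B ∈ ℬ, ∏ i ∈ T B, v i with hG_def
  have hG : ∀ v : Fin n → ℝ, (∀ i, 0 ≤ v i) → 0 ≤ G v := fun v hv =>
    Finset.sum_nonneg fun B _ => Finset.prod_nonneg fun i _ => hv i
  have hN : (0:ℝ) < (ℬ.card : ℝ) := by
    exact_mod_cast Finset.card_pos.2 hne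
  have hνnn : ∀ i, 0 ≤ ν i := fun i => by
    rw [hν i]; positivity
  have hνpos : ∀ B ∈ ℬ, ∀ i ∈ T B, 0 < ν i := by
    intro B hB i hi
    rw [hν i]
    have : 0 < (ℬ.filter (fun B => i ∈ T B)).card :=
      Finset.card_pos.2 ⟨B, Finset.mem_filter.2 ⟨hB, hi⟩⟩
    positivity
  set v : Finset (Fin n) → Fin n → ℝ :=
    fun B i => if i ∈ T B then (ν i)⁻¹ else if ν i = 0 then 1 else 0 with hv_def
  have hvnn : ∀ B ∈ ℬ, ∀ i, 0 ≤ v B i := by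
    intro B _ i
    rw [hv_def]
    dsimp only
    split
    · exact inv_nonneg.2 (hνnn i)
    · split <;> norm_num
  -- the coordinatewise sum of all v B equals card
  have hcoord : ∀ i, ∑ B ∈ ℬ, v B i = (ℬ.card : ℝ) := by
    intro i
    have hsplit := Finset.sum_filter_add_sum_filter_not ℬ (fun B => i ∈ T B) (fun B => v B i)
    have e1 : ∑ B ∈ ℬ.filter (fun B => i ∈ T B), v B i
        = ((ℬ.filter (fun B => i ∈ T B)).card : ℝ) * (ν i)⁻¹ := by
      rw [Finset.sum_congr rfl (fun B hB => ?_), Finset.sum_const, nsmul_eq_mul]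
      rw [hv_def]; dsimp only
      rw [if_pos (Finset.mem_filter.1 hB).2]
    have e2 : ∑ B ∈ ℬ.filter (fun B => ¬ i ∈ T B), v B i
        = ((ℬ.filter (fun B => ¬ i ∈ T B)).card : ℝ) * (if ν i = 0 then 1 else 0) := by
      rw [Finset.sum_congr rfl (fun B hB => ?_), Finset.sum_const, nsmul_eq_mul]
      rw [hv_def]; dsimp only
      rw [if_neg (Finset.mem_filter.1 hB).2]
    have hcards : ((ℬ.filter (fun B => i ∈ T B)).card : ℝ)
        + ((ℬ.filter (fun B => ¬ i ∈ T B)).card : ℝ) = (ℬ.card : ℝ) := by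
      exact_mod_cast Finset.card_filter_add_card_filter_not (fun B => i ∈ T B)
    rw [← hsplit, e1, e2]
    by_cases hzero : ν i = 0
    · have hd0 : ((ℬ.filter (fun B => i ∈ T B)).card : ℝ) = 0 := by
        have h : ((ℬ.filter (fun B => i ∈ T B)).card : ℝ) / (ℬ.card : ℝ) = 0 := by
          rw [← hν i, hzero]
        exact (div_eq_zero_iff.1 h).resolve_right hN.ne'
      rw [if_pos hzero, hzero]
      rw [hd0] at hcards ⊢
      simp only [inv_zero, mul_zero, mul_one, zero_add] at *
      linarith
    · have hd : ((ℬ.filter (fun B => i ∈ T B)).card : ℝ) ≠ 0 := by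
        intro h
        apply hzero
        rw [hν i, h, zero_div]
      rw [if_neg hzero, mul_zero, add_zero]
      rw [hν i]
      field_simp
  have happ := lc_multi G hG (fun v w hv hw l hl0 hl1 => hlc v w hv hw l hl0 hl1) ℬ
      (fun _ => (ℬ.card : ℝ)⁻¹) v
      (fun B _ => inv_nonneg.2 hN.le)
      (by rw [Finset.sum_const, nsmul_eq_mul, mul_inv_cancel₀ hN.ne'])
      hvnn
  have hone : (∑ B ∈ ℬ, ((ℬ.card : ℝ)⁻¹) • v B) = fun _ : Fin n => (1:ℝ) := by
    funext i
    rw [Finset.sum_apply]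
    have hc : ∀ B ∈ ℬ, (((ℬ.card : ℝ)⁻¹) • v B) i = (ℬ.card : ℝ)⁻¹ * v B i :=
      fun B _ => rfl
    rw [Finset.sum_congr rfl hc, ← Finset.mul_sum, hcoord i, inv_mul_cancel₀ hN.ne']
  have hG1 : G (fun _ : Fin n => (1:ℝ)) = (ℬ.card : ℝ) := by
    rw [hG_def]; simp
  rw [hone, hG1] at happ
  have hlow : ∀ B ∈ ℬ, (∏ i ∈ T B, (ν i)⁻¹) ≤ G (v B) := by
    intro B hB
    have h1 : (∏ i ∈ T B, v B i) ≤ G (v B) :=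
      Finset.single_le_sum (fun B' _ => Finset.prod_nonneg fun i _ => hvnn B hB i) hB
    refine le_trans (le_of_eq (Finset.prod_congr rfl fun i hi => ?_)) h1
    rw [hv_def]; dsimp only; rw [if_pos hi]
  have hPpos : ∀ B ∈ ℬ, 0 < ∏ i ∈ T B, (ν i)⁻¹ := fun B hB =>
    Finset.prod_pos fun i hi => inv_pos.2 (hνpos B hB i hi)
  have hchain : ∏ B ∈ ℬ, (∏ i ∈ T B, (ν i)⁻¹) ^ (ℬ.card : ℝ)⁻¹ ≤ (ℬ.card : ℝ) :=
    le_trans (Finset.prod_le_prod (fun B hB => Real.rpow_nonneg (hPpos B hB).le _)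
      (fun B hB => Real.rpow_le_rpow (hPpos B hB).le (hlow B hB) (inv_nonneg.2 hN.le))) happ
  have hXpos : 0 < ∏ B ∈ ℬ, (∏ i ∈ T B, (ν i)⁻¹) ^ (ℬ.card : ℝ)⁻¹ :=
    Finset.prod_pos fun B hB => Real.rpow_pos_of_pos (hPpos B hB) _
  have hlog := Real.log_le_log hXpos hchain
  rw [Real.log_prod (fun B hB => (Real.rpow_pos_of_pos (hPpos B hB) _).ne')] at hlog
  have hterm : ∀ B ∈ ℬ, Real.log ((∏ i ∈ T B, (ν i)⁻¹) ^ (ℬ.card : ℝ)⁻¹)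
      = (ℬ.card : ℝ)⁻¹ * ∑ i ∈ T B, Real.log (ν i)⁻¹ := by
    intro B hB
    rw [Real.log_rpow (hPpos B hB),
      Real.log_prod (fun i hi => (inv_pos.2 (hνpos B hB i hi)).ne')]
  rw [Finset.sum_congr rfl hterm, ← Finset.mul_sum,
    swap_sum ℬ T (fun i => Real.log (ν i)⁻¹)] at hlog
  calc ∑ i : Fin n, ν i * Real.log (1 / ν i)
      = (ℬ.card : ℝ)⁻¹ * ∑ i : Fin n,
          ((ℬ.filter (fun B => i ∈ T B)).card : ℝ) * Real.log (ν i)⁻¹ := by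
        rw [Finset.mul_sum]
        refine Finset.sum_congr rfl fun i _ => ?_
        rw [one_div, hν i]
        ring
    _ ≤ Real.log (ℬ.card : ℝ) := hlog

private lemma upper_bound {n : ℕ} (ℬ : Finset (Finset (Fin n))) (hne : ℬ.Nonempty)
    (μ : Fin n → ℝ)
    (hμ : ∀ i, μ i = ((ℬ.filter (fun B => i ∈ B)).card : ℝ) / (ℬ.card : ℝ)) :
    Real.log (ℬ.card : ℝ) ≤ ∑ i : Fin n, binEntropy (μ i) := by
  classical
  have hN : (0:ℝ) < (ℬ.card : ℝ) := by exact_mod_cast Finset.card_pos.2 hne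
  have hμnn : ∀ i, 0 ≤ μ i := fun i => by rw [hμ i]; positivity
  have hμle : ∀ i, μ i ≤ 1 := fun i => by
    rw [hμ i, div_le_one hN]
    exact_mod_cast Finset.card_le_card (Finset.filter_subset _ _)
  have hμpos : ∀ B ∈ ℬ, ∀ i ∈ B, 0 < μ i := by
    intro B hB i hi
    rw [hμ i]
    have : 0 < (ℬ.filter (fun B => i ∈ B)).card :=
      Finset.card_pos.2 ⟨B, Finset.mem_filter.2 ⟨hB, hi⟩⟩
    positivity
  have hμlt : ∀ B ∈ ℬ, ∀ i ∈ Bᶜ, 0 < 1 - μ i := by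
    intro B hB i hi
    have hlt : μ i < 1 := by
      rw [hμ i, div_lt_one hN]
      have hss : ℬ.filter (fun B => i ∈ B) ⊂ ℬ :=
        (Finset.ssubset_iff_of_subset (Finset.filter_subset _ _)).2
          ⟨B, hB, fun hmem => (Finset.mem_compl.1 hi) (Finset.mem_filter.1 hmem).2⟩
      exact_mod_cast Finset.card_lt_card hss
    linarith
  set q : Finset (Fin n) → ℝ := fun B => (∏ i ∈ B, μ i) * ∏ i ∈ Bᶜ, (1 - μ i) with hq_def
  have hqpos : ∀ B ∈ ℬ, 0 < q B := fun B hB =>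
    mul_pos (Finset.prod_pos fun i hi => hμpos B hB i hi)
      (Finset.prod_pos fun i hi => hμlt B hB i hi)
  have hqnn : ∀ B, 0 ≤ q B := fun B =>
    mul_nonneg (Finset.prod_nonneg fun i _ => hμnn i)
      (Finset.prod_nonneg fun i _ => by linarith [hμle i])
  have hqsum : ∑ B ∈ ℬ, q B ≤ 1 := by
    have h1 : ∑ B ∈ ℬ, q B ≤ ∑ S ∈ (univ : Finset (Fin n)).powerset, q S :=
      Finset.sum_le_sum_of_subset_of_nonneg
        (fun B _ => Finset.mem_powerset.2 (Finset.subset_univ B))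
        (fun S _ _ => hqnn S)
    have h2 : ∑ S ∈ (univ : Finset (Fin n)).powerset, q S = 1 := by
      have hpa := Finset.prod_add μ (fun i => 1 - μ i) (univ : Finset (Fin n))
      simp only [add_sub_cancel, Finset.prod_const_one] at hpa
      have hq2 : ∀ S ∈ (univ : Finset (Fin n)).powerset, q S
          = (∏ i ∈ S, μ i) * ∏ i ∈ univ \ S, (1 - μ i) := by
        intro S _
        rw [hq_def]
        dsimp only
        rw [Finset.compl_eq_univ_sdiff]
      rw [Finset.sum_congr rfl hq2, ← hpa]
    linarith
  -- Gibbs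
  have key : ∑ B ∈ ℬ, (ℬ.card:ℝ)⁻¹ * Real.log ((ℬ.card:ℝ) * q B) ≤ 0 := by
    have step : ∑ B ∈ ℬ, (ℬ.card:ℝ)⁻¹ * Real.log ((ℬ.card:ℝ) * q B)
        ≤ ∑ B ∈ ℬ, (ℬ.card:ℝ)⁻¹ * ((ℬ.card:ℝ) * q B - 1) :=
      Finset.sum_le_sum fun B hB => mul_le_mul_of_nonneg_left
        (Real.log_le_sub_one_of_pos (mul_pos hN (hqpos B hB))) (inv_nonneg.2 hN.le)
    have step2 : ∑ B ∈ ℬ, (ℬ.card:ℝ)⁻¹ * ((ℬ.card:ℝ) * q B - 1)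
        = (∑ B ∈ ℬ, q B) - 1 := by
      have : ∀ B ∈ ℬ, (ℬ.card:ℝ)⁻¹ * ((ℬ.card:ℝ) * q B - 1) = q B - (ℬ.card:ℝ)⁻¹ := by
        intro B _
        field_simp
      rw [Finset.sum_congr rfl this, Finset.sum_sub_distrib, Finset.sum_const, nsmul_eq_mul,
        mul_inv_cancel₀ hN.ne']
    linarith
  have keyL : ∑ B ∈ ℬ, (ℬ.card:ℝ)⁻¹ * Real.log ((ℬ.card:ℝ) * q B)
      = Real.log (ℬ.card:ℝ) + (ℬ.card:ℝ)⁻¹ * ∑ B ∈ ℬ, Real.log (q B) := by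
    have h1 : ∀ B ∈ ℬ, (ℬ.card:ℝ)⁻¹ * Real.log ((ℬ.card:ℝ) * q B)
        = (ℬ.card:ℝ)⁻¹ * Real.log (ℬ.card:ℝ) + (ℬ.card:ℝ)⁻¹ * Real.log (q B) := by
      intro B hB
      rw [Real.log_mul hN.ne' (hqpos B hB).ne']
      ring
    rw [Finset.sum_congr rfl h1, Finset.sum_add_distrib, Finset.sum_const, nsmul_eq_mul,
      ← mul_assoc, mul_inv_cancel₀ hN.ne', one_mul, ← Finset.mul_sum]
  -- identify the entropy
  have hid : ∀ B ∈ ℬ, Real.log (q B)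
      = (∑ i ∈ B, Real.log (μ i)) + ∑ i ∈ Bᶜ, Real.log (1 - μ i) := by
    intro B hB
    rw [hq_def]
    dsimp only
    rw [Real.log_mul (Finset.prod_pos fun i hi => hμpos B hB i hi).ne'
        (Finset.prod_pos fun i hi => hμlt B hB i hi).ne',
      Real.log_prod (fun i hi => (hμpos B hB i hi).ne'),
      Real.log_prod (fun i hi => (hμlt B hB i hi).ne')]
  have hswap1 : ∑ B ∈ ℬ, ∑ i ∈ B, Real.log (μ i)
      = ∑ i : Fin n, ((ℬ.filter (fun B => i ∈ B)).card : ℝ) * Real.log (μ i) :=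
    swap_sum ℬ (fun B => B) _
  have hswap2 : ∑ B ∈ ℬ, ∑ i ∈ Bᶜ, Real.log (1 - μ i)
      = ∑ i : Fin n, ((ℬ.filter (fun B => i ∈ Bᶜ)).card : ℝ) * Real.log (1 - μ i) :=
    swap_sum ℬ (fun B => Bᶜ) _
  have hsum1 : ∑ B ∈ ℬ, Real.log (q B)
      = (∑ i : Fin n, ((ℬ.filter (fun B => i ∈ B)).card : ℝ) * Real.log (μ i))
        + ∑ i : Fin n, ((ℬ.filter (fun B => i ∈ Bᶜ)).card : ℝ) * Real.log (1 - μ i) := by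
    rw [Finset.sum_congr rfl hid, Finset.sum_add_distrib, hswap1, hswap2]
  have hd : ∀ i, ((ℬ.filter (fun B => i ∈ B)).card : ℝ)
      + ((ℬ.filter (fun B => i ∈ Bᶜ)).card : ℝ) = (ℬ.card : ℝ) := by
    intro i
    have hfc : (ℬ.filter (fun B => i ∈ Bᶜ)) = (ℬ.filter (fun B => ¬ i ∈ B)) := by
      apply Finset.filter_congr
      intro B _
      simp [Finset.mem_compl]
    rw [hfc]
    exact_mod_cast Finset.card_filter_add_card_filter_not (s := ℬ) (fun B => i ∈ B)
  have h1' : ∀ i, ((ℬ.filter (fun B => i ∈ B)).card : ℝ) = μ i * (ℬ.card:ℝ) := by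
    intro i
    rw [hμ i]
    field_simp
  have h2' : ∀ i, ((ℬ.filter (fun B => i ∈ Bᶜ)).card : ℝ) = (1 - μ i) * (ℬ.card:ℝ) := by
    intro i
    have := hd i
    rw [h1' i] at this
    linarith
  have hENT : (ℬ.card:ℝ) * ∑ i : Fin n, binEntropy (μ i) = - ∑ B ∈ ℬ, Real.log (q B) := by
    rw [Finset.mul_sum, hsum1, neg_add, ← Finset.sum_neg_distrib, ← Finset.sum_neg_distrib,
      ← Finset.sum_add_distrib]
    refine Finset.sum_congr rfl fun i _ => ?_
    rw [binEntropy, one_div, one_div, Real.log_inv, Real.log_inv, h1' i, h2' i]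
    ring
  have hfin : (ℬ.card:ℝ)⁻¹ * ∑ B ∈ ℬ, Real.log (q B) = - ∑ i : Fin n, binEntropy (μ i) := by
    have hS : ∑ B ∈ ℬ, Real.log (q B) = -((ℬ.card:ℝ) * ∑ i : Fin n, binEntropy (μ i)) := by
      linarith [hENT]
    rw [hS]
    rw [mul_neg, ← mul_assoc, inv_mul_cancel₀ hN.ne', one_mul]
  rw [keyL, hfin] at key
  linarith

private lemma one_sub_log_le {x : ℝ} (h0 : 0 ≤ x) (h1 : x ≤ 1) :
    (1 - x) * Real.log (1 / (1 - x)) ≤ x := by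
  rcases eq_or_lt_of_le h1 with h | h
  · rw [h]
    norm_num
  · have hpos : 0 < 1 - x := by linarith
    have hl := Real.log_le_sub_one_of_pos (x := 1 / (1 - x)) (by positivity)
    have h2 : (1 - x) * Real.log (1 / (1 - x)) ≤ (1 - x) * (1 / (1 - x) - 1) :=
      mul_le_mul_of_nonneg_left hl hpos.le
    have h3 : (1 - x) * (1 / (1 - x) - 1) = x := by field_simp; ring
    linarith

/-- **Counting bases of a matroid via marginal entropies.** Let `M` be a matroid of rank
`r` on ground set `[n]`, let `ℬ` be its (nonempty) finite set of bases, and let `μᵢ` be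
the marginals of the uniform distribution over `ℬ`. Assuming the basis generating
polynomials of `M` and of its dual are log-concave on the positive orthant, we have
`max{(1/2) ∑ᵢ H(μᵢ), ∑ᵢ H(μᵢ) − r} ≤ log |ℬ| ≤ ∑ᵢ H(μᵢ)`. -/
theorem matroid_basis_counting
    {n r : ℕ} (M : Matroid (Fin n)) (hE : M.E = Set.univ)
    (ℬ : Finset (Finset (Fin n)))
    (hℬ : ∀ S : Finset (Fin n), S ∈ ℬ ↔ M.IsBase (S : Set (Fin n)))
    (hne : ℬ.Nonempty)
    (hrank : ∀ B ∈ ℬ, B.card = r)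
    (μ : Fin n → ℝ)
    (hμ : ∀ i, μ i = ((ℬ.filter (fun B => i ∈ B)).card : ℝ) / (ℬ.card : ℝ))
    (hlc : ∀ v w : Fin n → ℝ, (∀ i, 0 ≤ v i) → (∀ i, 0 ≤ w i) →
      ∀ l : ℝ, 0 ≤ l → l ≤ 1 →
        (∑ B ∈ ℬ, ∏ i ∈ B, v i) ^ l * (∑ B ∈ ℬ, ∏ i ∈ B, w i) ^ (1 - l) ≤
          ∑ B ∈ ℬ, ∏ i ∈ B, (l • v + (1 - l) • w) i)
    (hlcdual : ∀ v w : Fin n → ℝ, (∀ i, 0 ≤ v i) → (∀ i, 0 ≤ w i) →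
      ∀ l : ℝ, 0 ≤ l → l ≤ 1 →
        (∑ B ∈ ℬ, ∏ i ∈ Bᶜ, v i) ^ l * (∑ B ∈ ℬ, ∏ i ∈ Bᶜ, w i) ^ (1 - l) ≤
          ∑ B ∈ ℬ, ∏ i ∈ Bᶜ, (l • v + (1 - l) • w) i) :
    max ((1 / 2) * ∑ i : Fin n, binEntropy (μ i))
        ((∑ i : Fin n, binEntropy (μ i)) - r) ≤ Real.log (ℬ.card : ℝ) ∧
      Real.log (ℬ.card : ℝ) ≤ ∑ i : Fin n, binEntropy (μ i) := by
  classical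
  have hN : (0:ℝ) < (ℬ.card : ℝ) := by exact_mod_cast Finset.card_pos.2 hne
  have hμnn : ∀ i, 0 ≤ μ i := fun i => by rw [hμ i]; positivity
  have hμle : ∀ i, μ i ≤ 1 := fun i => by
    rw [hμ i, div_le_one hN]
    exact_mod_cast Finset.card_le_card (Finset.filter_subset _ _)
  -- dual marginals
  have hd : ∀ i, ((ℬ.filter (fun B => i ∈ B)).card : ℝ)
      + ((ℬ.filter (fun B => i ∈ Bᶜ)).card : ℝ) = (ℬ.card : ℝ) := by
    intro i
    have hfc : (ℬ.filter (fun B => i ∈ Bᶜ)) = (ℬ.filter (fun B => ¬ i ∈ B)) := by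
      apply Finset.filter_congr
      intro B _
      simp [Finset.mem_compl]
    rw [hfc]
    exact_mod_cast Finset.card_filter_add_card_filter_not (s := ℬ) (fun B => i ∈ B)
  have hν2 : ∀ i, 1 - μ i = ((ℬ.filter (fun B => i ∈ Bᶜ)).card : ℝ) / (ℬ.card : ℝ) := by
    intro i
    have h1 : ((ℬ.filter (fun B => i ∈ B)).card : ℝ) = μ i * (ℬ.card : ℝ) := by
      rw [hμ i]; field_simp
    have h2 : ((ℬ.filter (fun B => i ∈ Bᶜ)).card : ℝ) = (1 - μ i) * (ℬ.card : ℝ) := by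
      have := hd i
      rw [h1] at this
      linarith
    rw [h2]
    rw [mul_div_assoc, div_self hN.ne', mul_one]
  -- the two core bounds
  have core1 : ∑ i : Fin n, μ i * Real.log (1 / μ i) ≤ Real.log (ℬ.card : ℝ) :=
    core_bound ℬ hne (fun B => B) μ hμ hlc
  have core2 : ∑ i : Fin n, (1 - μ i) * Real.log (1 / (1 - μ i)) ≤ Real.log (ℬ.card : ℝ) :=
    core_bound ℬ hne (fun B => Bᶜ) (fun i => 1 - μ i) hν2 hlcdual
  have upper : Real.log (ℬ.card : ℝ) ≤ ∑ i : Fin n, binEntropy (μ i) :=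
    upper_bound ℬ hne μ hμ
  -- sum of marginals is r
  have hsumμ : ∑ i : Fin n, μ i = (r : ℝ) := by
    have hsw := swap_sum ℬ (fun B => B) (fun _ => (1:ℝ))
    simp only [mul_one] at hsw
    have hL : ∑ B ∈ ℬ, ∑ i ∈ B, (1:ℝ) = (ℬ.card : ℝ) * r := by
      have hc : ∀ B ∈ ℬ, ∑ i ∈ B, (1:ℝ) = (r:ℝ) := by
        intro B hB
        rw [Finset.sum_const, nsmul_eq_mul, mul_one]
        exact_mod_cast hrank B hB
      rw [Finset.sum_congr rfl hc, Finset.sum_const, nsmul_eq_mul]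
    have hR : ∑ i : Fin n, ((ℬ.filter (fun B => i ∈ B)).card : ℝ)
        = (ℬ.card : ℝ) * ∑ i : Fin n, μ i := by
      rw [Finset.mul_sum]
      refine Finset.sum_congr rfl fun i _ => ?_
      rw [hμ i]
      field_simp
    rw [hL, hR] at hsw
    exact (mul_left_cancel₀ hN.ne' hsw).symm
  -- splitting the entropy sum
  have hsplitH : ∑ i : Fin n, binEntropy (μ i)
      = (∑ i : Fin n, μ i * Real.log (1 / μ i))
        + ∑ i : Fin n, (1 - μ i) * Real.log (1 / (1 - μ i)) := by
    rw [← Finset.sum_add_distrib]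
    exact Finset.sum_congr rfl fun i _ => rfl
  have hptw : ∑ i : Fin n, (1 - μ i) * Real.log (1 / (1 - μ i)) ≤ (r : ℝ) := by
    rw [← hsumμ]
    exact Finset.sum_le_sum fun i _ => one_sub_log_le (hμnn i) (hμle i)
  refine ⟨max_le ?_ ?_, upper⟩
  · linarith
  · linarith
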